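/- Let b be a holomorphic map of the open unit disk 𝔻 ⊂ ℂ into itself and let f : 𝔻 → ℂ satisfy that the kernel (z,w) ↦ (1 − b(z)·conj(b(w)))/(1 − z·conj(w)) − f(z)·conj(f(w)) is positive semidefinite on 𝔻. Then for every function g analytic on 𝔻 whose Taylor coefficients a_n = g^{(n)}(0)/n! satisfy ∑_{n≥0} |a_n|² < ∞, the function h(z) = f(z)·g(b(z)) is analytic on 𝔻 and its Taylor coefficients c_n = h^{(n)}(0)/n! satisfy ∑_{n≥0} |c_n|² ≤ ∑_{n≥0} |a_n|². (This is Theorem 1: the weighted composition operator T_f C_b is bounded on H² with ‖T_f C_b‖ ≤ ‖f‖_{H(b)}.) -/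

import Mathlib

open Complex Metric ComplexConjugate
open scoped ComplexOrder
open scoped ENNReal NNReal

noncomputable section

/-- A kernel `K : X → X → ℂ` is positive semidefinite on a set `S`: for all finite
families of points of `S` and scalars, the associated quadratic form is a
nonnegative real number (using the partial order on `ℂ`). -/
def IsPSDKernelOn {X : Type*} (K : X → X → ℂ) (S : Set X) : Prop :=
  ∀ (n : ℕ) (x : Fin n → X), (∀ i, x i ∈ S) → ∀ c : Fin n → ℂ,
    0 ≤ ∑ i, ∑ j, c i * conj (c j) * K (x i) (x j)

abbrev Ell2 : Type := lp (fun _ : ℕ => ℂ) 2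

lemma memK {w : ℂ} (hw : ‖w‖ < 1) : Memℓp (fun n : ℕ => (conj w) ^ n) 2 := by
  apply memℓp_gen
  have : ENNReal.toReal 2 = (2:ℝ) := by norm_num
  rw [this]
  have h1 : ∀ n : ℕ, ‖(conj w) ^ n‖ ^ (2:ℝ) = (‖w‖^2) ^ n := by
    intro n
    have : ((2:ℝ)) = ((2:ℕ):ℝ) := by norm_num
    rw [this, Real.rpow_natCast, norm_pow, RCLike.norm_conj]
    ring
  simp only [h1]
  exact summable_geometric_of_lt_one (by positivity) (by
    nlinarith [norm_nonneg w])

def Kv (w : ℂ) (hw : ‖w‖ < 1) : Ell2 := ⟨fun n : ℕ => (conj w) ^ n, memK hw⟩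

lemma Kv_apply (w : ℂ) (hw : ‖w‖ < 1) (n : ℕ) : (Kv w hw : ∀ _ : ℕ, ℂ) n = (conj w) ^ n := rfl

local notation "⟪" x ", " y "⟫" => @inner ℂ _ _ x y

lemma inner_Kv_right {w : ℂ} (hw : ‖w‖ < 1) (a : Ell2) :
    ⟪Kv w hw, a⟫ = ∑' n : ℕ, (a n) * w ^ n := by
  rw [lp.inner_eq_tsum]
  congr 1
  ext n
  rw [RCLike.inner_apply, Kv_apply]
  rw [map_pow, Complex.conj_conj]

lemma inner_Kv_Kv {v w : ℂ} (hv : ‖v‖ < 1) (hw : ‖w‖ < 1) :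
    ⟪Kv v hv, Kv w hw⟫ = (1 - v * conj w)⁻¹ := by
  rw [inner_Kv_right]
  have : ∀ n : ℕ, ((Kv w hw : ∀ _ : ℕ, ℂ) n) * v ^ n = (v * conj w) ^ n := by
    intro n; rw [Kv_apply]; ring
  rw [tsum_congr this]
  exact tsum_geometric_of_norm_lt_one (by
    rw [norm_mul, RCLike.norm_conj]; nlinarith [norm_nonneg v, norm_nonneg w])

lemma powerSeries_hasF {a : ℕ → ℂ} {C : ℝ} (hC : ∀ n, ‖a n‖ ≤ C) :
    HasFPowerSeriesOnBall (fun z => ∑' n : ℕ, a n * z ^ n)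
      (FormalMultilinearSeries.ofScalars ℂ a) 0 1 := by
  set p := FormalMultilinearSeries.ofScalars ℂ a with hp
  have hrad : (1 : ℝ≥0∞) ≤ p.radius := by
    apply ENNReal.le_of_forall_nnreal_lt
    intro r hr
    apply p.le_radius_of_bound C
    intro n
    calc ‖p n‖ * (r:ℝ) ^ n ≤ C * 1 := by
          apply mul_le_mul
          · rw [hp, FormalMultilinearSeries.ofScalars_norm]; exact hC n
          · apply pow_le_one₀ r.coe_nonneg
            exact_mod_cast hr.le
          · positivity
          · exact (norm_nonneg (a 0)).trans (hC 0)
      _ = C := mul_one C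
  have hF := p.hasFPowerSeriesOnBall (lt_of_lt_of_le one_pos hrad)
  have hsum : p.sum = fun z => ∑' n : ℕ, a n * z ^ n := by
    funext z
    rw [hp]
    rw [← FormalMultilinearSeries.ofScalarsSum]
    rw [FormalMultilinearSeries.ofScalars_sum_eq]
    simp [smul_eq_mul]
  rw [hsum] at hF
  exact hF.mono one_pos hrad

lemma powerSeries_diffOn {a : ℕ → ℂ} {C : ℝ} (hC : ∀ n, ‖a n‖ ≤ C) :
    DifferentiableOn ℂ (fun z => ∑' n : ℕ, a n * z ^ n) (ball (0:ℂ) 1) := by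
  have h := (powerSeries_hasF hC).differentiableOn
  have : Metric.eball (0:ℂ) 1 = ball (0:ℂ) 1 := by
    rw [show (1:ℝ≥0∞) = ((1:ℝ≥0):ℝ≥0∞) by norm_num, Metric.eball_coe]; norm_num
  rwa [this] at h

lemma powerSeries_iteratedDeriv {a : ℕ → ℂ} {C : ℝ} (hC : ∀ n, ‖a n‖ ≤ C) (n : ℕ) :
    iteratedDeriv n (fun z => ∑' n : ℕ, a n * z ^ n) 0 = (n.factorial : ℂ) * a n := by
  have h := (powerSeries_hasF hC).factorial_smul (1 : ℂ) n
  rw [iteratedDeriv_eq_iteratedFDeriv, ← h]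
  rw [FormalMultilinearSeries.ofScalars_apply_eq]
  simp [nsmul_eq_mul]

section Schur
variable {m : ℕ}

lemma sum4_comm (F : Fin m → Fin m → Fin m → Fin m → ℂ) :
    ∑ i, ∑ j, ∑ k, ∑ l, F i j k l = ∑ k, ∑ l, ∑ i, ∑ j, F i j k l := by
  have h1 : ∑ i, ∑ j, ∑ k, ∑ l, F i j k l = ∑ i, ∑ k, ∑ j, ∑ l, F i j k l :=
    Finset.sum_congr rfl fun i _ => Finset.sum_comm
  have h2 : ∑ i, ∑ k, ∑ j, ∑ l, F i j k l = ∑ k, ∑ i, ∑ j, ∑ l, F i j k l :=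
    Finset.sum_comm
  have h3 : ∑ k, ∑ i, ∑ j, ∑ l, F i j k l = ∑ k, ∑ i, ∑ l, ∑ j, F i j k l :=
    Finset.sum_congr rfl fun k _ => Finset.sum_congr rfl fun i _ => Finset.sum_comm
  have h4 : ∑ k, ∑ i, ∑ l, ∑ j, F i j k l = ∑ k, ∑ l, ∑ i, ∑ j, F i j k l :=
    Finset.sum_congr rfl fun k _ => Finset.sum_comm
  rw [h1, h2, h3, h4]

/-- form-PSD + hermitian gives a Gram decomposition. -/
lemma gram_decomp {A : Fin m → Fin m → ℂ}
    (hA : ∀ c : Fin m → ℂ, 0 ≤ ∑ i, ∑ j, c i * conj (c j) * A i j)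
    (hAh : ∀ i j, conj (A i j) = A j i) :
    ∃ R : Matrix (Fin m) (Fin m) ℂ, ∀ i j, A i j = ∑ k, conj (R k j) * R k i := by
  set MA : Matrix (Fin m) (Fin m) ℂ := Matrix.of fun i j => A j i with hMA
  have hPSD : MA.PosSemidef := by
    refine Matrix.PosSemidef.of_dotProduct_mulVec_nonneg ?_ ?_
    · ext i j
      rw [Matrix.conjTranspose_apply]
      show star (A i j) = A j i
      exact hAh i j
    · intro x
      have := hA x
      calc (0:ℂ) ≤ ∑ i, ∑ j, x i * conj (x j) * A i j := hA x
        _ = dotProduct (star x) (MA.mulVec x) := by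
            rw [Finset.sum_comm]
            simp only [dotProduct, Matrix.mulVec, dotProduct, hMA,
              Matrix.of_apply, Pi.star_apply, Finset.mul_sum, RCLike.star_def]
            apply Finset.sum_congr rfl
            intro j _
            apply Finset.sum_congr rfl
            intro i _
            ring
  obtain ⟨R, hR⟩ : ∃ R : Matrix (Fin m) (Fin m) ℂ, MA = R.conjTranspose * R := by
    open scoped MatrixOrder in
    exact ⟨CFC.sqrt MA, by
      rw [(Matrix.nonneg_iff_posSemidef.mp (CFC.sqrt_nonneg MA)).1.eq, CFC.sqrt_mul_sqrt_self MA (Matrix.nonneg_iff_posSemidef.mpr hPSD)]⟩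
  refine ⟨R, fun i j => ?_⟩
  have : MA j i = (R.conjTranspose * R) j i := by rw [hR]
  simp only [hMA, Matrix.of_apply, Matrix.mul_apply, Matrix.conjTranspose_apply,
    RCLike.star_def] at this
  exact this

lemma schur_form {A B : Fin m → Fin m → ℂ}
    (hA : ∀ c : Fin m → ℂ, 0 ≤ ∑ i, ∑ j, c i * conj (c j) * A i j)
    (hAh : ∀ i j, conj (A i j) = A j i)
    (hB : ∀ c : Fin m → ℂ, 0 ≤ ∑ i, ∑ j, c i * conj (c j) * B i j)
    (hBh : ∀ i j, conj (B i j) = B j i)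
    (c : Fin m → ℂ) :
    0 ≤ ∑ i, ∑ j, c i * conj (c j) * (A i j * B i j) := by
  obtain ⟨R, hR⟩ := gram_decomp hA hAh
  obtain ⟨S, hS⟩ := gram_decomp hB hBh
  have key : ∑ i, ∑ j, c i * conj (c j) * (A i j * B i j)
      = ∑ k, ∑ l, ((∑ i, c i * R k i * S l i) * conj (∑ j, c j * R k j * S l j)) := by
    have expand : ∀ i j, c i * conj (c j) * (A i j * B i j)
        = ∑ k, ∑ l, (c i * R k i * S l i) * conj (c j * R k j * S l j) := by
      intro i j
      rw [hR, hS, Finset.sum_mul_sum]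
      rw [Finset.mul_sum]
      apply Finset.sum_congr rfl
      intro k _
      rw [Finset.mul_sum]
      apply Finset.sum_congr rfl
      intro l _
      simp only [map_mul]
      ring
    calc ∑ i, ∑ j, c i * conj (c j) * (A i j * B i j)
        = ∑ i, ∑ j, ∑ k, ∑ l, (c i * R k i * S l i) * conj (c j * R k j * S l j) := by
          exact Finset.sum_congr rfl fun i _ => Finset.sum_congr rfl fun j _ => expand i j
      _ = ∑ k, ∑ l, ∑ i, ∑ j, (c i * R k i * S l i) * conj (c j * R k j * S l j) :=
          sum4_comm _
      _ = ∑ k, ∑ l, ((∑ i, c i * R k i * S l i) * conj (∑ j, c j * R k j * S l j)) := by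
          apply Finset.sum_congr rfl; intro k _
          apply Finset.sum_congr rfl; intro l _
          rw [map_sum, Finset.sum_mul_sum]
  rw [key]
  apply Finset.sum_nonneg
  intro k _
  apply Finset.sum_nonneg
  intro l _
  rw [Complex.mul_conj]
  rw [Complex.zero_le_real]
  exact Complex.normSq_nonneg _

lemma rank_one_form {m : ℕ} (v : Fin m → ℂ) (c : Fin m → ℂ) :
    ∑ i, ∑ j, c i * conj (c j) * (v i * conj (v j))
      = ((Complex.normSq (∑ i, c i * v i) : ℝ) : ℂ) := by
  rw [← Complex.mul_conj (∑ i, c i * v i), map_sum, Finset.sum_mul_sum]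
  apply Finset.sum_congr rfl; intro i _
  apply Finset.sum_congr rfl; intro j _
  rw [map_mul]; ring

lemma rank_one_form_nonneg {m : ℕ} (v : Fin m → ℂ) (c : Fin m → ℂ) :
    0 ≤ ∑ i, ∑ j, c i * conj (c j) * (v i * conj (v j)) := by
  rw [rank_one_form, Complex.zero_le_real]
  exact Complex.normSq_nonneg _

lemma inner_u_u {m : ℕ} (x : Fin m → ℂ) (hx : ∀ i, ‖x i‖ < 1) (c : Fin m → ℂ) :
    ∑ i, ∑ j, c i * conj (c j) * (1 - x i * conj (x j))⁻¹
      = ((‖∑ i, conj (c i) • Kv (x i) (hx i)‖ ^ 2 : ℝ) : ℂ) := by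
  set u : Ell2 := ∑ i, conj (c i) • Kv (x i) (hx i) with hu
  have h1 : (⟪u, u⟫ : ℂ) = ∑ i, ∑ j, c i * conj (c j) * (1 - x i * conj (x j))⁻¹ := by
    rw [hu, sum_inner]
    apply Finset.sum_congr rfl; intro i _
    rw [inner_smul_left, inner_sum]
    rw [Finset.mul_sum]
    apply Finset.sum_congr rfl; intro j _
    rw [inner_smul_right, inner_Kv_Kv (hx i) (hx j)]
    simp only [Complex.conj_conj]
    ring
  rw [← h1, inner_self_eq_norm_sq_to_K (𝕜 := ℂ) u]
  norm_cast

lemma inner_u_a {m : ℕ} (x : Fin m → ℂ) (hx : ∀ i, ‖x i‖ < 1) (c : Fin m → ℂ) (a : Ell2) :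
    (⟪∑ i, conj (c i) • Kv (x i) (hx i), a⟫ : ℂ) = ∑ i, c i * (∑' n : ℕ, a n * (x i) ^ n) := by
  rw [sum_inner]
  apply Finset.sum_congr rfl; intro i _
  rw [inner_smul_left, inner_Kv_right (hx i) a]
  simp only [Complex.conj_conj]

/-- The master identity: the quadratic form of the kernel `M2·k − v v̄` equals a real number. -/
lemma form_eq {m : ℕ} (x : Fin m → ℂ) (hx : ∀ i, ‖x i‖ < 1) (c : Fin m → ℂ)
    (v : Fin m → ℂ) (M2 : ℝ) :
    ∑ i, ∑ j, c i * conj (c j) * ((M2:ℂ) * (1 - x i * conj (x j))⁻¹ - v i * conj (v j))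
      = ((M2 * ‖∑ i, conj (c i) • Kv (x i) (hx i)‖ ^ 2
          - Complex.normSq (∑ i, c i * v i) : ℝ) : ℂ) := by
  have split : ∑ i, ∑ j, c i * conj (c j) * ((M2:ℂ) * (1 - x i * conj (x j))⁻¹ - v i * conj (v j))
      = (M2:ℂ) * (∑ i, ∑ j, c i * conj (c j) * (1 - x i * conj (x j))⁻¹)
        - ∑ i, ∑ j, c i * conj (c j) * (v i * conj (v j)) := by
    rw [Finset.mul_sum, ← Finset.sum_sub_distrib]
    apply Finset.sum_congr rfl; intro i _
    rw [Finset.mul_sum, ← Finset.sum_sub_distrib]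
    apply Finset.sum_congr rfl; intro j _
    ring
  rw [split, inner_u_u x hx c, rank_one_form]
  push_cast
  ring

lemma szego_minus_g_form (a : Ell2) {m : ℕ} (x : Fin m → ℂ) (hx : ∀ i, ‖x i‖ < 1)
    (c : Fin m → ℂ) :
    0 ≤ ∑ i, ∑ j, c i * conj (c j) * (((‖a‖^2 : ℝ) : ℂ) * (1 - x i * conj (x j))⁻¹
        - (∑' n : ℕ, a n * (x i) ^ n) * conj (∑' n : ℕ, a n * (x j) ^ n)) := by
  rw [form_eq x hx c (fun i => ∑' n : ℕ, a n * (x i) ^ n) (‖a‖^2), Complex.zero_le_real]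
  set u : Ell2 := ∑ i, conj (c i) • Kv (x i) (hx i) with hu
  have h2 : (∑ i, c i * (∑' n : ℕ, a n * (x i) ^ n)) = ⟪u, a⟫ := (inner_u_a x hx c a).symm
  rw [h2]
  have h3 : ‖(⟪u, a⟫ : ℂ)‖ ≤ ‖u‖ * ‖a‖ := norm_inner_le_norm u a
  have h4 : Complex.normSq (⟪u, a⟫ : ℂ) = ‖(⟪u, a⟫ : ℂ)‖^2 := by
    rw [Complex.normSq_eq_norm_sq]
  rw [h4]
  nlinarith [norm_nonneg u, norm_nonneg a, norm_nonneg (⟪u, a⟫ : ℂ)]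


lemma one_sub_ne {z w : ℂ} (hz : ‖z‖ < 1) (hw : ‖w‖ < 1) : 1 - z * conj w ≠ 0 := by
  intro h
  have : z * conj w = 1 := by linear_combination -h
  have h2 : ‖z * conj w‖ = 1 := by rw [this, norm_one]
  rw [norm_mul, RCLike.norm_conj] at h2
  nlinarith [norm_nonneg z, norm_nonneg w]

lemma main_form (b f g : ℂ → ℂ)
    (hb_maps : ∀ z ∈ ball (0 : ℂ) 1, b z ∈ ball (0 : ℂ) 1)
    (hpos : IsPSDKernelOn
      (fun z w => (1 - b z * conj (b w)) / (1 - z * conj w) - f z * conj (f w))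
      (ball (0 : ℂ) 1))
    (a : Ell2) (hgrep : ∀ w : ℂ, ‖w‖ < 1 → g w = ∑' n : ℕ, a n * w ^ n)
    {m : ℕ} (x : Fin m → ℂ) (hx : ∀ i, ‖x i‖ < 1) (c : Fin m → ℂ) :
    0 ≤ ∑ i, ∑ j, c i * conj (c j) * (((‖a‖^2 : ℝ) : ℂ) * (1 - x i * conj (x j))⁻¹
        - (f (x i) * g (b (x i))) * conj (f (x j) * g (b (x j)))) := by
  have hxball : ∀ i, x i ∈ ball (0:ℂ) 1 := fun i => mem_ball_zero_iff.mpr (hx i)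
  have hbx : ∀ i, ‖b (x i)‖ < 1 := fun i => mem_ball_zero_iff.mp (hb_maps _ (hxball i))
  set P : Fin m → Fin m → ℂ := fun i j =>
    (1 - b (x i) * conj (b (x j))) / (1 - x i * conj (x j)) - f (x i) * conj (f (x j)) with hP
  set Q : Fin m → Fin m → ℂ := fun i j =>
    ((‖a‖^2 : ℝ) : ℂ) * (1 - b (x i) * conj (b (x j)))⁻¹
      - g (b (x i)) * conj (g (b (x j))) with hQ
  set F : Fin m → Fin m → ℂ := fun i j => f (x i) * conj (f (x j)) with hF
  set G : Fin m → Fin m → ℂ := fun i j => g (b (x i)) * conj (g (b (x j))) with hG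
  have hPform : ∀ c : Fin m → ℂ, 0 ≤ ∑ i, ∑ j, c i * conj (c j) * P i j :=
    fun c => hpos m x hxball c
  have hPh : ∀ i j, conj (P i j) = P j i := by
    intro i j
    simp only [hP, map_sub, map_div₀, map_mul, map_one, Complex.conj_conj]
    ring
  have hQform : ∀ c : Fin m → ℂ, 0 ≤ ∑ i, ∑ j, c i * conj (c j) * Q i j := by
    intro c
    have := szego_minus_g_form a (fun i => b (x i)) hbx c
    have hrw : ∀ i j, Q i j = ((‖a‖^2 : ℝ) : ℂ) * (1 - b (x i) * conj (b (x j)))⁻¹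
        - (∑' n : ℕ, a n * (b (x i)) ^ n) * conj (∑' n : ℕ, a n * (b (x j)) ^ n) := by
      intro i j
      rw [hQ]
      simp only [← hgrep _ (hbx i), ← hgrep _ (hbx j)]
    calc (0:ℂ) ≤ _ := this
      _ = ∑ i, ∑ j, c i * conj (c j) * Q i j := by
        apply Finset.sum_congr rfl; intro i _
        apply Finset.sum_congr rfl; intro j _
        rw [hrw i j]
  have hQh : ∀ i j, conj (Q i j) = Q j i := by
    intro i j
    simp only [hQ, map_sub, map_mul, map_inv₀, map_one, Complex.conj_conj, Complex.conj_ofReal]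
    ring
  have hFh : ∀ i j, conj (F i j) = F j i := by
    intro i j; simp only [hF, map_mul, Complex.conj_conj]; ring
  have hGh : ∀ i j, conj (G i j) = G j i := by
    intro i j; simp only [hG, map_mul, Complex.conj_conj]; ring
  have hFform : ∀ c : Fin m → ℂ, 0 ≤ ∑ i, ∑ j, c i * conj (c j) * F i j :=
    fun c => rank_one_form_nonneg (fun i => f (x i)) c
  have hGform : ∀ c : Fin m → ℂ, 0 ≤ ∑ i, ∑ j, c i * conj (c j) * G i j :=
    fun c => rank_one_form_nonneg (fun i => g (b (x i))) c
  have entry : ∀ i j, ((‖a‖^2 : ℝ) : ℂ) * (1 - x i * conj (x j))⁻¹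
      - (f (x i) * g (b (x i))) * conj (f (x j) * g (b (x j)))
      = P i j * Q i j + P i j * G i j + F i j * Q i j := by
    intro i j
    have d1 : (1 : ℂ) - x i * conj (x j) ≠ 0 := one_sub_ne (hx i) (hx j)
    have d2 : (1 : ℂ) - b (x i) * conj (b (x j)) ≠ 0 := one_sub_ne (hbx i) (hbx j)
    simp only [hP, hQ, hF, hG, map_mul]
    field_simp
    ring
  have splitsum : ∑ i, ∑ j, c i * conj (c j) * (((‖a‖^2 : ℝ) : ℂ) * (1 - x i * conj (x j))⁻¹
        - (f (x i) * g (b (x i))) * conj (f (x j) * g (b (x j))))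
      = (∑ i, ∑ j, c i * conj (c j) * (P i j * Q i j))
        + (∑ i, ∑ j, c i * conj (c j) * (P i j * G i j))
        + (∑ i, ∑ j, c i * conj (c j) * (F i j * Q i j)) := by
    rw [← Finset.sum_add_distrib, ← Finset.sum_add_distrib]
    apply Finset.sum_congr rfl; intro i _
    rw [← Finset.sum_add_distrib, ← Finset.sum_add_distrib]
    apply Finset.sum_congr rfl; intro j _
    rw [entry i j]
    ring
  rw [splitsum]
  have t1 := schur_form hPform hPh hQform hQh c
  have t2 := schur_form hPform hPh hGform hGh c
  have t3 := schur_form hFform hFh hQform hQh c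
  calc (0:ℂ) ≤ 0 + 0 + 0 := by norm_num
    _ ≤ _ := by
        apply add_le_add (add_le_add t1 t2) t3

lemma main_real (b f g : ℂ → ℂ)
    (hb_maps : ∀ z ∈ ball (0 : ℂ) 1, b z ∈ ball (0 : ℂ) 1)
    (hpos : IsPSDKernelOn
      (fun z w => (1 - b z * conj (b w)) / (1 - z * conj w) - f z * conj (f w))
      (ball (0 : ℂ) 1))
    (a : Ell2) (hgrep : ∀ w : ℂ, ‖w‖ < 1 → g w = ∑' n : ℕ, a n * w ^ n)
    {m : ℕ} (x : Fin m → ℂ) (hx : ∀ i, ‖x i‖ < 1) (c : Fin m → ℂ) :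
    ‖∑ i, c i * (f (x i) * g (b (x i)))‖
      ≤ ‖a‖ * ‖∑ i, conj (c i) • Kv (x i) (hx i)‖ := by
  have h0 := main_form b f g hb_maps hpos a hgrep x hx c
  rw [form_eq x hx c (fun i => f (x i) * g (b (x i))) (‖a‖^2)] at h0
  rw [Complex.zero_le_real] at h0
  set s := ∑ i, c i * (f (x i) * g (b (x i))) with hs
  set u := ∑ i, conj (c i) • Kv (x i) (hx i) with hu
  have hns : Complex.normSq s = ‖s‖^2 := by rw [Complex.normSq_eq_norm_sq]
  rw [hns] at h0
  nlinarith [norm_nonneg s, norm_nonneg u, norm_nonneg a,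
    mul_nonneg (norm_nonneg a) (norm_nonneg u)]

lemma riesz_rep (b f g : ℂ → ℂ)
    (hb_maps : ∀ z ∈ ball (0 : ℂ) 1, b z ∈ ball (0 : ℂ) 1)
    (hpos : IsPSDKernelOn
      (fun z w => (1 - b z * conj (b w)) / (1 - z * conj w) - f z * conj (f w))
      (ball (0 : ℂ) 1))
    (a : Ell2) (hgrep : ∀ w : ℂ, ‖w‖ < 1 → g w = ∑' n : ℕ, a n * w ^ n) :
    ∃ aa : Ell2, ‖aa‖ ≤ ‖a‖ ∧
      ∀ w : ℂ, ∀ hw : ‖w‖ < 1, f w * g (b w) = ∑' n : ℕ, (aa n) * w ^ n := by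
  classical
  set D := ↥(ball (0:ℂ) 1) with hD
  have hmem : ∀ w : D, ‖(w : ℂ)‖ < 1 := fun w => mem_ball_zero_iff.mp w.2
  set KD : D → Ell2 := fun w => Kv (w : ℂ) (hmem w) with hKD
  set T : (D →₀ ℂ) →ₗ[ℂ] Ell2 := Finsupp.linearCombination ℂ KD with hT
  set L0 : (D →₀ ℂ) →ₗ[ℂ] ℂ :=
    Finsupp.linearCombination ℂ (fun w : D => conj (f (w : ℂ) * g (b (w : ℂ)))) with hL0
  -- the key bound
  have hbound : ∀ d : D →₀ ℂ, ‖L0 d‖ ≤ ‖a‖ * ‖T d‖ := by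
    intro d
    set s := d.support with hs
    set e := s.equivFin with he
    set σ : Fin s.card → D := fun i => (e.symm i : D) with hσ
    set x : Fin s.card → ℂ := fun i => ((σ i : D) : ℂ) with hxd
    have hx : ∀ i, ‖x i‖ < 1 := fun i => hmem (σ i)
    set cc : Fin s.card → ℂ := fun i => conj (d (σ i)) with hcc
    have hTd : T d = ∑ i, conj (cc i) • Kv (x i) (hx i) := by
      rw [hT, Finsupp.linearCombination_apply, Finsupp.sum, ← hs]
      rw [← Finset.sum_coe_sort s (fun w => d w • KD w)]
      rw [← Equiv.sum_comp e.symm (fun w : ↥s => d (w : D) • KD (w : D))]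
      apply Finset.sum_congr rfl
      intro i _
      simp only [hcc, hxd, hσ, hKD, Complex.conj_conj]
    have hLd : L0 d = conj (∑ i, cc i * (f (x i) * g (b (x i)))) := by
      rw [hL0, Finsupp.linearCombination_apply, Finsupp.sum, ← hs]
      rw [← Finset.sum_coe_sort s (fun w => d w • conj (f (w : ℂ) * g (b (w : ℂ))))]
      rw [← Equiv.sum_comp e.symm
        (fun w : ↥s => d (w : D) • conj (f ((w : D) : ℂ) * g (b ((w : D) : ℂ))))]
      rw [map_sum]
      apply Finset.sum_congr rfl
      intro i _
      simp only [hcc, hxd, hσ, map_mul, Complex.conj_conj, smul_eq_mul]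
    rw [hTd, hLd, RCLike.norm_conj]
    exact main_real b f g hb_maps hpos a hgrep x hx cc
  have hker : LinearMap.ker T ≤ LinearMap.ker L0 := by
    intro d hd
    rw [LinearMap.mem_ker] at hd ⊢
    have := hbound d
    rw [hd, norm_zero, mul_zero] at this
    exact norm_le_zero_iff.mp this
  set Lq := Submodule.liftQ (LinearMap.ker T) L0 hker with hLq
  set eqv := LinearMap.quotKerEquivRange T with heqv
  set Llin : ↥(LinearMap.range T) →ₗ[ℂ] ℂ := Lq.comp eqv.symm.toLinearMap with hLlin
  have hLlin_app : ∀ d : D →₀ ℂ, ∀ hmem' : T d ∈ LinearMap.range T,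
      Llin ⟨T d, hmem'⟩ = L0 d := by
    intro d hmem'
    rw [hLlin, LinearMap.comp_apply, LinearEquiv.coe_toLinearMap, heqv,
      LinearMap.quotKerEquivRange_symm_apply_image, hLq]
    rfl
  have hbnd2 : ∀ v : ↥(LinearMap.range T), ‖Llin v‖ ≤ ‖a‖ * ‖(v : Ell2)‖ := by
    rintro ⟨v, hv⟩
    obtain ⟨d, rfl⟩ := hv
    erw [hLlin_app d]
    exact hbound d
  set Lc : ↥(LinearMap.range T) →L[ℂ] ℂ := Llin.mkContinuous ‖a‖ hbnd2 with hLc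
  have hLcnorm : ‖Lc‖ ≤ ‖a‖ := Llin.mkContinuous_norm_le (norm_nonneg a) hbnd2
  obtain ⟨Lext, hext, hnorm⟩ := exists_extension_norm_eq (LinearMap.range T) Lc
  set aa := (InnerProductSpace.toDual ℂ Ell2).symm Lext with haa
  refine ⟨aa, ?_, ?_⟩
  · rw [haa]
    rw [LinearIsometryEquiv.norm_map]
    rw [hnorm]
    exact hLcnorm
  · intro w hw
    have hwball : w ∈ ball (0:ℂ) 1 := mem_ball_zero_iff.mpr hw
    set d : D →₀ ℂ := Finsupp.single (⟨w, hwball⟩ : D) 1 with hd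
    have hTd : T d = Kv w hw := by
      rw [hT, hd, Finsupp.linearCombination_single, one_smul]
    have hmem' : Kv w hw ∈ LinearMap.range T := ⟨d, hTd⟩
    have h1 : Lext (Kv w hw) = conj (f w * g (b w)) := by
      have h2 := hext ⟨Kv w hw, hmem'⟩
      have h3 : Lc ⟨Kv w hw, hmem'⟩ = L0 d := by
        rw [hLc]
        have : (⟨Kv w hw, hmem'⟩ : ↥(LinearMap.range T)) = ⟨T d, ⟨d, rfl⟩⟩ := by
          apply Subtype.ext; exact hTd.symm
        rw [this]
        exact hLlin_app d ⟨d, rfl⟩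
      have h4 : L0 d = conj (f w * g (b w)) := by
        rw [hL0, hd, Finsupp.linearCombination_single, smul_eq_mul, one_mul]
      rw [h2, h3, h4]
    have h5 : (⟪aa, Kv w hw⟫ : ℂ) = conj (f w * g (b w)) := by
      rw [haa, InnerProductSpace.toDual_symm_apply, h1]
    have h6 : (⟪aa, Kv w hw⟫ : ℂ) = conj (⟪Kv w hw, aa⟫ : ℂ) := (inner_conj_symm _ _).symm
    rw [h6, inner_Kv_right hw aa] at h5
    have := congrArg conj h5
    simpa only [Complex.conj_conj] using this.symm

lemma memEll2_of_sq_summable {v : ℕ → ℂ} (hv : Summable (fun n => ‖v n‖ ^ 2)) :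
    Memℓp v 2 := by
  apply memℓp_gen
  have h2 : ENNReal.toReal 2 = (2:ℝ) := by norm_num
  rw [h2]
  have : ∀ n : ℕ, ‖v n‖ ^ (2:ℝ) = ‖v n‖ ^ (2:ℕ) := by
    intro n
    rw [show ((2:ℝ)) = ((2:ℕ):ℝ) by norm_num, Real.rpow_natCast]
  simpa only [this] using hv

lemma ell2_norm_sq (x : Ell2) : ‖x‖ ^ 2 = ∑' n : ℕ, ‖x n‖ ^ 2 := by
  have h := lp.norm_rpow_eq_tsum (p := 2) (by norm_num) x
  have h2 : ENNReal.toReal 2 = (2:ℝ) := by norm_num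
  rw [h2] at h
  have conv : ∀ y : ℝ, 0 ≤ y → y ^ (2:ℝ) = y ^ (2:ℕ) := by
    intro y hy
    rw [show ((2:ℝ)) = ((2:ℕ):ℝ) by norm_num, Real.rpow_natCast]
  rw [← conv _ (norm_nonneg x), h]
  exact tsum_congr fun n => conv _ (norm_nonneg _)

lemma ell2_sq_summable (x : Ell2) : Summable (fun n : ℕ => ‖x n‖ ^ 2) := by
  have := lp.memℓp x
  rw [memℓp_gen_iff (by norm_num : 0 < ENNReal.toReal 2)] at this
  have h2 : ENNReal.toReal 2 = (2:ℝ) := by norm_num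
  rw [h2] at this
  have conv : ∀ n : ℕ, ‖x n‖ ^ (2:ℝ) = ‖x n‖ ^ (2:ℕ) := by
    intro n
    rw [show ((2:ℝ)) = ((2:ℕ):ℝ) by norm_num, Real.rpow_natCast]
  simpa only [conv] using this

/-- Theorem 1 (Hardy-space form): if `f` lies in the unit ball of the de
Branges–Rovnyak space `H(b)` (expressed by positivity of
`k^b(z,w) − f(z)·conj(f(w))`), then for every `g ∈ H²` the function
`h(z) = f(z)·g(b(z))` is analytic on the disk, lies in `H²`, and
`‖h‖_{H²} ≤ ‖g‖_{H²}` in terms of Taylor coefficients. -/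
theorem weighted_composition_bounded_H2
    (b f : ℂ → ℂ)
    (hb_holo : DifferentiableOn ℂ b (ball (0 : ℂ) 1))
    (hb_maps : ∀ z ∈ ball (0 : ℂ) 1, b z ∈ ball (0 : ℂ) 1)
    (hpos : IsPSDKernelOn
      (fun z w => (1 - b z * conj (b w)) / (1 - z * conj w) - f z * conj (f w))
      (ball (0 : ℂ) 1))
    (g : ℂ → ℂ)
    (hg_holo : DifferentiableOn ℂ g (ball (0 : ℂ) 1))
    (hg_sum : Summable (fun n : ℕ => ‖iteratedDeriv n g 0 / (n.factorial : ℂ)‖ ^ 2)) :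
    DifferentiableOn ℂ (fun z => f z * g (b z)) (ball (0 : ℂ) 1) ∧
    Summable (fun n : ℕ =>
      ‖iteratedDeriv n (fun z => f z * g (b z)) 0 / (n.factorial : ℂ)‖ ^ 2) ∧
    ∑' n : ℕ, ‖iteratedDeriv n (fun z => f z * g (b z)) 0 / (n.factorial : ℂ)‖ ^ 2 ≤
      ∑' n : ℕ, ‖iteratedDeriv n g 0 / (n.factorial : ℂ)‖ ^ 2 := by
  classical
  set ag : Ell2 := ⟨fun n : ℕ => iteratedDeriv n g 0 / (n.factorial : ℂ),
    memEll2_of_sq_summable hg_sum⟩ with hag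
  have hgrep : ∀ w : ℂ, ‖w‖ < 1 → g w = ∑' n : ℕ, (ag n) * w ^ n := by
    intro w hw
    have := Complex.taylorSeries_eq_on_ball' (mem_ball_zero_iff.mpr hw) hg_holo
    rw [← this]
    apply tsum_congr
    intro n
    rw [sub_zero]
    show _ = iteratedDeriv n g 0 / (n.factorial : ℂ) * w ^ n
    ring
  obtain ⟨aa, haa_norm, haa_rep⟩ := riesz_rep b f g hb_maps hpos ag hgrep
  have hC : ∀ n : ℕ, ‖(aa : ∀ _ : ℕ, ℂ) n‖ ≤ ‖aa‖ :=
    fun n => lp.norm_apply_le_norm (by norm_num) aa n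
  have hdiff : DifferentiableOn ℂ (fun z => f z * g (b z)) (ball (0 : ℂ) 1) := by
    apply (powerSeries_diffOn hC).congr
    intro w hw
    exact haa_rep w (mem_ball_zero_iff.mp hw)
  have hevent : (fun z => f z * g (b z)) =ᶠ[nhds (0:ℂ)] (fun z => ∑' n : ℕ, (aa n) * z ^ n) := by
    filter_upwards [Metric.ball_mem_nhds (0:ℂ) one_pos] with w hw
    exact haa_rep w (mem_ball_zero_iff.mp hw)
  have hcoef : ∀ n : ℕ, iteratedDeriv n (fun z => f z * g (b z)) 0 / (n.factorial : ℂ)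
      = aa n := by
    intro n
    rw [hevent.iteratedDeriv_eq n, powerSeries_iteratedDeriv hC n]
    exact mul_div_cancel_left₀ _ (by exact_mod_cast Nat.factorial_ne_zero n)
  constructor
  · exact hdiff
  constructor
  · simp only [hcoef]
    exact ell2_sq_summable aa
  · calc ∑' n : ℕ, ‖iteratedDeriv n (fun z => f z * g (b z)) 0 / (n.factorial : ℂ)‖ ^ 2
        = ∑' n : ℕ, ‖(aa : ∀ _ : ℕ, ℂ) n‖ ^ 2 := by
          apply tsum_congr; intro n; rw [hcoef n]
      _ = ‖aa‖ ^ 2 := (ell2_norm_sq aa).symm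
      _ ≤ ‖ag‖ ^ 2 := by nlinarith [norm_nonneg aa, norm_nonneg ag]
      _ = ∑' n : ℕ, ‖(ag : ∀ _ : ℕ, ℂ) n‖ ^ 2 := ell2_norm_sq ag
      _ = ∑' n : ℕ, ‖iteratedDeriv n g 0 / (n.factorial : ℂ)‖ ^ 2 := by
          apply tsum_congr; intro n; rfl
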